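/- The pair (Spc(K), supp) is the final support data on K: for any support data (X, σ) on K there exists a unique continuous map f : X → Spc(K) with σ(a) = f^{-1}(supp(a)) for all objects a, given explicitly by f(x) = {a ∈ K : x ∉ σ(a)}. -/

import Mathlib

open CategoryTheory CategoryTheory.Limits CategoryTheory.Pretriangulated
open CategoryTheory.MonoidalCategory
open ZeroObject

universe v u w

variable (C : Type u) [Category.{v} C] [Preadditive C] [HasZeroObject C]
  [HasShift C ℤ] [∀ n : ℤ, (shiftFunctor C n).Additive] [Pretriangulated C]
  [HasBinaryBiproducts C] [MonoidalCategory C] [SymmetricCategory C]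

/-- A thick tensor-ideal: a class of objects closed under isomorphism, containing 0,
satisfying two-out-of-three for distinguished triangles, closed under direct summands,
and closed under tensoring (on either side) with arbitrary objects. -/
structure IsThickTensorIdeal (J : Set C) : Prop where
  iso_closed : ∀ {a b : C}, (a ≅ b) → a ∈ J → b ∈ J
  zero_mem : (0 : C) ∈ J
  tri₃ : ∀ T : Triangle C, T ∈ (distTriang C) → T.obj₁ ∈ J → T.obj₂ ∈ J → T.obj₃ ∈ J
  tri₂ : ∀ T : Triangle C, T ∈ (distTriang C) → T.obj₁ ∈ J → T.obj₃ ∈ J → T.obj₂ ∈ J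
  tri₁ : ∀ T : Triangle C, T ∈ (distTriang C) → T.obj₂ ∈ J → T.obj₃ ∈ J → T.obj₁ ∈ J
  thick : ∀ a b : C, (a ⊞ b) ∈ J → a ∈ J ∧ b ∈ J
  ideal_right : ∀ a b : C, a ∈ J → a ⊗ b ∈ J
  ideal_left : ∀ a b : C, a ∈ J → b ⊗ a ∈ J

/-- A prime thick tensor-ideal. -/
structure IsPrimeIdeal (P : Set C) extends IsThickTensorIdeal C P : Prop where
  proper : P ≠ Set.univ
  prime : ∀ a b : C, a ⊗ b ∈ P → a ∈ P ∨ b ∈ P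

/-- The Balmer spectrum: the set of prime thick tensor-ideals. -/
def SpcK : Type _ := {P : Set C // IsPrimeIdeal C P}

/-- The support of an object. -/
def suppK (a : C) : Set (SpcK C) := {P | a ∉ P.1}

/-- The Zariski topology, generated by the basic open sets U(a) = {P | a ∈ P}. -/
instance : TopologicalSpace (SpcK C) :=
  TopologicalSpace.generateFrom {U | ∃ a : C, U = {P : SpcK C | a ∈ P.1}}

/-- A tensor-multiplicative collection of objects. -/
def IsMult (S : Set C) : Prop := 𝟙_ C ∈ S ∧ ∀ a ∈ S, ∀ b ∈ S, a ⊗ b ∈ S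

/-- The smallest thick tensor-ideal containing `E`. -/
def genIdeal (E : Set C) : Set C := ⋂₀ {J : Set C | IsThickTensorIdeal C J ∧ E ⊆ J}

/-- The n-fold tensor power of an object (with `tpow a 1 = a`). -/
def tpow (a : C) : ℕ → C
  | 0 => 𝟙_ C
  | 1 => a
  | n+2 => tpow a (n+1) ⊗ a

/-- A support data on `K`: a topological space `X` together with closed subsets
`σ a ⊆ X` satisfying the axioms (SD1)-(SD5). -/
structure SupportData (X : Type w) [TopologicalSpace X] : Type (max u w) where
  σ : C → Set X
  closed : ∀ a : C, IsClosed (σ a)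
  zero : σ (0 : C) = ∅
  unit : σ (𝟙_ C) = Set.univ
  sum : ∀ a b : C, σ (a ⊞ b) = σ a ∪ σ b
  shift : ∀ a : C, σ (a⟦(1:ℤ)⟧) = σ a
  triangle : ∀ T : Triangle C, T ∈ (distTriang C) → σ T.obj₁ ⊆ σ T.obj₂ ∪ σ T.obj₃
  tensor : ∀ a b : C, σ (a ⊗ b) = σ a ∩ σ b


section Aux

variable {C}

/-- From an isomorphism `a ≅ b` we get a distinguished triangle `(a, b, 0)`. -/
lemma iso_triangle_dist {a b : C} (e : a ≅ b) :
    Triangle.mk e.hom (0 : b ⟶ (0 : C)) (0 : (0 : C) ⟶ a⟦(1:ℤ)⟧) ∈ distTriang C := by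
  refine isomorphic_distinguished _ (contractible_distinguished a) _ ?_
  exact Triangle.isoMk _ _ (Iso.refl a) e.symm (Iso.refl 0) (by exact (e.hom_inv_id).trans (Category.comp_id _).symm)
    (by exact (zero_comp).trans (comp_zero).symm) (by exact (isZero_zero C).eq_of_src _ _)

variable {X : Type w} [TopologicalSpace X]

lemma SupportData.triangle₂ (sd : SupportData C X) (T : Triangle C) (hT : T ∈ distTriang C) :
    sd.σ T.obj₂ ⊆ sd.σ T.obj₃ ∪ sd.σ T.obj₁ := by
  have := sd.triangle T.rotate (rot_of_distTriang T hT)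
  simpa [Triangle.rotate, sd.shift] using this

lemma SupportData.triangle₃ (sd : SupportData C X) (T : Triangle C) (hT : T ∈ distTriang C) :
    sd.σ T.obj₃ ⊆ sd.σ T.obj₁ ∪ sd.σ T.obj₂ := by
  have := sd.triangle₂ T.rotate (rot_of_distTriang T hT)
  simpa [Triangle.rotate, sd.shift] using this

lemma SupportData.iso (sd : SupportData C X) {a b : C} (e : a ≅ b) : sd.σ a = sd.σ b := by
  have h1 := sd.triangle _ (iso_triangle_dist e)
  have h2 := sd.triangle₂ _ (iso_triangle_dist e)
  simp only [Triangle.mk, sd.zero, Set.union_empty, Set.empty_union] at h1 h2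
  exact le_antisymm h1 h2

/-- Membership facts for prime thick tensor-ideals. -/
lemma unit_not_mem {P : Set C} (hP : IsPrimeIdeal C P) : 𝟙_ C ∉ P := by
  intro h
  apply hP.proper
  ext b
  simp only [Set.mem_univ, iff_true]
  exact hP.iso_closed (ρ_ b) (hP.ideal_left _ b h)

lemma shift_mem_iff {P : Set C} (hP : IsPrimeIdeal C P) (a : C) :
    a⟦(1:ℤ)⟧ ∈ P ↔ a ∈ P := by
  have hT := rot_of_distTriang _ (contractible_distinguished a)
  constructor
  · intro h
    exact hP.tri₁ _ hT hP.zero_mem h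
  · intro h
    exact hP.tri₃ _ hT h hP.zero_mem

end Aux

/-- Theorem 3.2: (Spc K, supp) is the final support data on K. -/
theorem spc_final_support_data :
    ((∀ a : C, IsClosed (suppK C a)) ∧
      suppK C (0 : C) = ∅ ∧
      suppK C (𝟙_ C) = Set.univ ∧
      (∀ a b : C, suppK C (a ⊞ b) = suppK C a ∪ suppK C b) ∧
      (∀ a : C, suppK C (a⟦(1:ℤ)⟧) = suppK C a) ∧
      (∀ T : Triangle C, T ∈ (distTriang C) →
        suppK C T.obj₁ ⊆ suppK C T.obj₂ ∪ suppK C T.obj₃) ∧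
      (∀ a b : C, suppK C (a ⊗ b) = suppK C a ∩ suppK C b)) ∧
    (∀ (X : Type w) [TopologicalSpace X] (sd : SupportData C X),
      (∃! f : X → SpcK C,
        Continuous f ∧ ∀ a : C, sd.σ a = f ⁻¹' suppK C a) ∧
      (∀ f : X → SpcK C,
        (Continuous f ∧ ∀ a : C, sd.σ a = f ⁻¹' suppK C a) →
        ∀ (x : X) (a : C), a ∈ (f x).1 ↔ x ∉ sd.σ a)) := by
  classical
  have hbasic : ∀ a : C, IsOpen {P : SpcK C | a ∈ P.1} := fun a =>
    TopologicalSpace.isOpen_generateFrom_of_mem ⟨a, rfl⟩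
  constructor
  · refine ⟨?_, ?_, ?_, ?_, ?_, ?_, ?_⟩
    · intro a
      have : (suppK C a)ᶜ = {P : SpcK C | a ∈ P.1} := by ext P; simp [suppK]
      rw [← isOpen_compl_iff, this]
      exact hbasic a
    · ext P; simp [suppK, P.2.zero_mem]
    · ext P; simp [suppK, unit_not_mem P.2]
    · intro a b
      ext P
      simp only [suppK, Set.mem_setOf_eq, Set.mem_union]
      constructor
      · intro h
        by_contra hc
        push_neg at hc
        exact h (P.2.tri₂ _ (binaryBiproductTriangle_distinguished a b) hc.1 hc.2)
      · rintro (h | h) hmem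
        · exact h (P.2.thick a b hmem).1
        · exact h (P.2.thick a b hmem).2
    · intro a
      ext P
      simp only [suppK, Set.mem_setOf_eq]
      exact not_congr (shift_mem_iff P.2 a)
    · intro T hT P hP
      simp only [suppK, Set.mem_setOf_eq, Set.mem_union] at *
      by_contra hc
      push_neg at hc
      exact hP (P.2.tri₁ T hT hc.1 hc.2)
    · intro a b
      ext P
      simp only [suppK, Set.mem_setOf_eq, Set.mem_inter_iff]
      constructor
      · intro h
        exact ⟨fun ha => h (P.2.ideal_right a b ha), fun hb => h (P.2.ideal_left b a hb)⟩
      · rintro ⟨ha, hb⟩ hmem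
        rcases P.2.prime a b hmem with h | h
        · exact ha h
        · exact hb h
  · intro X _ sd
    have key : ∀ f : X → SpcK C,
        (Continuous f ∧ ∀ a : C, sd.σ a = f ⁻¹' suppK C a) →
        ∀ (x : X) (a : C), a ∈ (f x).1 ↔ x ∉ sd.σ a := by
      rintro f ⟨_, hf⟩ x a
      rw [hf a]
      simp [suppK]
    -- the prime ideal attached to a point
    have hPrime : ∀ x : X, IsPrimeIdeal C {a : C | x ∉ sd.σ a} := by
      intro x
      refine ⟨⟨?_, ?_, ?_, ?_, ?_, ?_, ?_, ?_⟩, ?_, ?_⟩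
      · intro a b e ha
        simpa [Set.mem_setOf_eq, ← sd.iso e] using ha
      · simp [Set.mem_setOf_eq, sd.zero]
      · intro T hT h1 h2 h3
        rcases sd.triangle₃ T hT h3 with h | h
        · exact h1 h
        · exact h2 h
      · intro T hT h1 h3 h2
        rcases sd.triangle₂ T hT h2 with h | h
        · exact h3 h
        · exact h1 h
      · intro T hT h2 h3 h1
        rcases sd.triangle T hT h1 with h | h
        · exact h2 h
        · exact h3 h
      · intro a b h
        simp only [Set.mem_setOf_eq, sd.sum, Set.mem_union, not_or] at h
        exact ⟨h.1, h.2⟩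
      · intro a b ha h
        rw [sd.tensor] at h
        exact ha h.1
      · intro a b ha h
        rw [sd.tensor] at h
        exact ha h.2
      · intro h
        have h1 : 𝟙_ C ∈ {a : C | x ∉ sd.σ a} := by rw [h]; trivial
        rw [Set.mem_setOf_eq, sd.unit] at h1
        exact h1 trivial
      · intro a b h
        simp only [Set.mem_setOf_eq, sd.tensor, Set.mem_inter_iff, not_and_or] at h
        exact h
    refine ⟨⟨fun x => ⟨{a : C | x ∉ sd.σ a}, hPrime x⟩, ⟨?_, ?_⟩, ?_⟩, key⟩
    · rw [show (instTopologicalSpaceSpcK C) =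
        TopologicalSpace.generateFrom {U | ∃ a : C, U = {P : SpcK C | a ∈ P.1}} from rfl]
      refine continuous_generateFrom_iff.2 ?_
      rintro s ⟨a, rfl⟩
      have : (fun x => (⟨{a : C | x ∉ sd.σ a}, hPrime x⟩ : SpcK C)) ⁻¹'
          {P : SpcK C | a ∈ P.1} = (sd.σ a)ᶜ := by
        ext x; exact Iff.rfl
      erw [this]
      exact (sd.closed a).isOpen_compl
    · intro a
      ext x
      constructor
      · exact fun h hh => hh h
      · exact fun h => not_not.mp h
    · intro g hg
      funext x
      apply Subtype.ext
      ext a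
      rw [key g hg x a]
      simp [Set.mem_setOf_eq]
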